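/- (Interaction energy law) Assume C, K > 0 and CK > R^2, and let d_i ≠ d_j be two dislocation points in a bounded open Ω ⊂ R^2 with u_i, w_i, u_j, w_j the corresponding single-dislocation fields. Then ∫_Ω (C u_i·u_j + K w_i·w_j + R u_i·w_j + R u_j·w_i) dx dy = ((C b_u^i b_u^j + K b_w^i b_w^j + R b_u^i b_w^j + R b_w^i b_u^j)/(2π)) · ln(1/|d_i − d_j|) + O(1), where the O(1) term is bounded in terms of Ω and the Burgers moduli, uniformly as |d_i − d_j| → 0 with both points staying a fixed distance from ∂Ω. -/

import Mathlib

open Real MeasureTheory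

def dot (p q : ℝ × ℝ) : ℝ := p.1 * q.1 + p.2 * q.2

def perp (p : ℝ × ℝ) : ℝ × ℝ := (-p.2, p.1)

noncomputable def dis (b : ℝ) (d0 : ℝ × ℝ) (z : ℝ × ℝ) : ℝ × ℝ :=
  (b / (2 * π * ((z.1 - d0.1) ^ 2 + (z.2 - d0.2) ^ 2))) • perp (z - d0)

open Metric Set
open scoped ENNReal ComplexConjugate

noncomputable def Ff (a b z : ℂ) : ℝ :=
  (conj (z - a) * (z - b)).re / (Complex.normSq (z - a) * Complex.normSq (z - b))

lemma meas_inv_norm_sub (c : ℂ) : Measurable (fun z : ℂ => ‖z - c‖⁻¹) :=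
  ((measurable_id.sub_const c).norm).inv

lemma lintegral_inv_norm_ball (c : ℂ) {R : ℝ} (hR : 0 < R) :
    ∫⁻ z in Metric.ball c R, ENNReal.ofReal ‖z - c‖⁻¹ ≤ ENNReal.ofReal (2 * π * R) := by
  have hmeas : AEMeasurable (fun z : ℂ => ‖z - c‖⁻¹) (volume.restrict (ball c R)) :=
    (meas_inv_norm_sub c).aemeasurable
  rw [lintegral_eq_lintegral_meas_lt _ (ae_of_all _ fun z => inv_nonneg.2 (norm_nonneg _)) hmeas]
  have hkey : ∀ t ∈ Ioi (0:ℝ),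
      (volume.restrict (ball c R)) {z : ℂ | t < ‖z - c‖⁻¹}
        ≤ ENNReal.ofReal (π * min R t⁻¹ ^ 2) := by
    intro t ht
    rw [Measure.restrict_apply' measurableSet_ball]
    have hsub : {z : ℂ | t < ‖z - c‖⁻¹} ∩ ball c R ⊆ ball c (min R t⁻¹) := by
      rintro z ⟨hz1, hz2⟩
      simp only [mem_ball, Complex.dist_eq] at hz2 ⊢
      simp only [mem_setOf_eq] at hz1
      rcases eq_or_ne z c with rfl | hzc
      · simp at hz1; exact absurd hz1 (not_lt.2 (le_of_lt ht))
      · have hpos : 0 < ‖z - c‖ := by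
          simpa [norm_pos_iff, sub_eq_zero] using hzc
        have hlt : ‖z - c‖ < t⁻¹ := (lt_inv_comm₀ (mem_Ioi.1 ht) hpos).1 hz1
        exact lt_min hz2 hlt
    calc volume ({z : ℂ | t < ‖z - c‖⁻¹} ∩ ball c R)
        ≤ volume (ball c (min R t⁻¹)) := measure_mono hsub
      _ = ENNReal.ofReal (min R t⁻¹) ^ 2 * NNReal.pi := Complex.volume_ball c _
      _ = ENNReal.ofReal (π * min R t⁻¹ ^ 2) := by
          rw [← ENNReal.ofReal_pow (le_min hR.le (inv_nonneg.2 (mem_Ioi.1 ht).le)),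
            ENNReal.ofReal_mul pi_nonneg, ← NNReal.coe_real_pi,
            ENNReal.ofReal_coe_nnreal, mul_comm]
  calc ∫⁻ t in Ioi (0:ℝ), (volume.restrict (ball c R)) {z : ℂ | t < ‖z - c‖⁻¹}
      ≤ ∫⁻ t in Ioi (0:ℝ), ENNReal.ofReal (π * min R t⁻¹ ^ 2) :=
        setLIntegral_mono (by fun_prop) hkey
    _ ≤ ENNReal.ofReal (2 * π * R) := by
        have hsplit : Ioi (0:ℝ) = Ioc 0 R⁻¹ ∪ Ioi R⁻¹ :=
          (Ioc_union_Ioi_eq_Ioi (le_of_lt (inv_pos.2 hR))).symm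
        rw [hsplit, lintegral_union measurableSet_Ioi (Ioc_disjoint_Ioi le_rfl)]
        have h1 : ∫⁻ t in Ioc (0:ℝ) R⁻¹, ENNReal.ofReal (π * min R t⁻¹ ^ 2)
            ≤ ENNReal.ofReal (π * R) := by
          calc ∫⁻ t in Ioc (0:ℝ) R⁻¹, ENNReal.ofReal (π * min R t⁻¹ ^ 2)
              ≤ ∫⁻ _t in Ioc (0:ℝ) R⁻¹, ENNReal.ofReal (π * R ^ 2) := by
                refine setLIntegral_mono measurable_const (fun t ht => ?_)
                refine ENNReal.ofReal_le_ofReal ?_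
                have h0 : 0 ≤ min R t⁻¹ := le_min hR.le (inv_nonneg.2 ht.1.le)
                have hle : min R t⁻¹ ≤ R := min_le_left _ _
                gcongr
            _ = ENNReal.ofReal (π * R ^ 2) * volume (Ioc (0:ℝ) R⁻¹) := by
                rw [setLIntegral_const]
            _ = ENNReal.ofReal (π * R) := by
                rw [Real.volume_Ioc, ← ENNReal.ofReal_mul (by positivity)]
                congr 1
                field_simp
                ring
        have h2 : ∫⁻ t in Ioi R⁻¹, ENNReal.ofReal (π * min R t⁻¹ ^ 2)
            ≤ ENNReal.ofReal (π * R) := by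
          have hcongr : ∀ t ∈ Ioi R⁻¹, ENNReal.ofReal (π * min R t⁻¹ ^ 2)
              = ENNReal.ofReal (π * t ^ (-2:ℝ)) := by
            intro t ht
            have ht0 : 0 < t := lt_trans (inv_pos.2 hR) ht
            have htinv : t⁻¹ < R := by
              rw [inv_lt_comm₀ ht0 hR]; exact ht
            rw [min_eq_right htinv.le]
            congr 1
            rw [Real.rpow_neg ht0.le, show (2:ℝ) = ((2:ℕ):ℝ) by norm_num,
              Real.rpow_natCast, inv_pow]
          rw [setLIntegral_congr_fun measurableSet_Ioi hcongr]
          have hint : IntegrableOn (fun t : ℝ => π * t ^ (-2:ℝ)) (Ioi R⁻¹) :=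
            (integrableOn_Ioi_rpow_of_lt (by norm_num) (inv_pos.2 hR)).const_mul π
          rw [← ofReal_integral_eq_lintegral_ofReal hint
            ((ae_restrict_iff' measurableSet_Ioi).2 (ae_of_all _ fun t ht =>
              mul_nonneg pi_nonneg (Real.rpow_nonneg (lt_trans (inv_pos.2 hR) ht).le _)))]
          apply le_of_eq
          congr 1
          rw [integral_const_mul,
            integral_Ioi_rpow_of_lt (by norm_num) (inv_pos.2 hR)]
          rw [show (-2:ℝ) + 1 = -1 by norm_num, Real.rpow_neg_one, inv_inv]
          ring
        calc _ ≤ ENNReal.ofReal (π * R) + ENNReal.ofReal (π * R) := add_le_add h1 h2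
          _ = ENNReal.ofReal (2 * π * R) := by
              rw [← ENNReal.ofReal_add (by positivity) (by positivity)]
              congr 1; ring

lemma integrableOn_inv_norm_ball (c : ℂ) {R : ℝ} (hR : 0 < R) :
    IntegrableOn (fun z : ℂ => ‖z - c‖⁻¹) (ball c R) := by
  refine ⟨(meas_inv_norm_sub c).aestronglyMeasurable, ?_⟩
  rw [hasFiniteIntegral_iff_norm]
  calc ∫⁻ z in ball c R, ENNReal.ofReal ‖‖z - c‖⁻¹‖
      = ∫⁻ z in ball c R, ENNReal.ofReal ‖z - c‖⁻¹ := by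
        simp [Real.norm_eq_abs, abs_of_nonneg (inv_nonneg.2 (norm_nonneg _))]
    _ ≤ ENNReal.ofReal (2 * π * R) := lintegral_inv_norm_ball c hR
    _ < ⊤ := ENNReal.ofReal_lt_top

lemma integrableOn_inv_norm_subset {c : ℂ} {R : ℝ} (hR : 0 < R) {s : Set ℂ}
    (hsub : s ⊆ ball c R) : IntegrableOn (fun z : ℂ => ‖z - c‖⁻¹) s :=
  (integrableOn_inv_norm_ball c hR).mono_set hsub

lemma setIntegral_inv_norm_le {c : ℂ} {R : ℝ} (hR : 0 < R) {s : Set ℂ}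
    (hs : MeasurableSet s) (hsub : s ⊆ ball c R) :
    ∫ z in s, ‖z - c‖⁻¹ ≤ 2 * π * R := by
  have h1 : ∫ z in s, ‖z - c‖⁻¹ ≤ ∫ z in ball c R, ‖z - c‖⁻¹ :=
    setIntegral_mono_set (integrableOn_inv_norm_ball c hR)
      (ae_of_all _ fun z => inv_nonneg.2 (norm_nonneg _)) (HasSubset.Subset.eventuallyLE hsub)
  refine h1.trans ?_
  rw [MeasureTheory.integral_eq_lintegral_of_nonneg_ae
    (ae_of_all _ fun z => inv_nonneg.2 (norm_nonneg _))
    (meas_inv_norm_sub c).aestronglyMeasurable]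
  calc (∫⁻ z in ball c R, ENNReal.ofReal ‖z - c‖⁻¹).toReal
      ≤ (ENNReal.ofReal (2 * π * R)).toReal :=
        ENNReal.toReal_mono ENNReal.ofReal_ne_top (lintegral_inv_norm_ball c hR)
    _ = 2 * π * R := ENNReal.toReal_ofReal (by positivity)

lemma measurable_Ff (a b : ℂ) : Measurable (Ff a b) := by
  have h1 : Continuous fun z : ℂ => (conj (z - a) * (z - b)).re := by continuity
  have h2 : Continuous fun z : ℂ => Complex.normSq (z - a) * Complex.normSq (z - b) := by
    continuity
  exact h1.measurable.div h2.measurable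

lemma abs_Ff_le (a b z : ℂ) : |Ff a b z| ≤ (‖z - a‖ * ‖z - b‖)⁻¹ := by
  rcases eq_or_ne z a with rfl | ha
  · simp [Ff]
  rcases eq_or_ne z b with rfl | hb
  · simp [Ff]
  have h1 : 0 < ‖z - a‖ := by simpa [norm_pos_iff, sub_eq_zero] using ha
  have h2 : 0 < ‖z - b‖ := by simpa [norm_pos_iff, sub_eq_zero] using hb
  have hnum : |(conj (z - a) * (z - b)).re| ≤ ‖z - a‖ * ‖z - b‖ := by
    calc |(conj (z - a) * (z - b)).re| ≤ ‖conj (z - a) * (z - b)‖ :=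
          Complex.abs_re_le_norm _
      _ = ‖z - a‖ * ‖z - b‖ := by
          rw [norm_mul, Complex.norm_conj]
  have hden : Complex.normSq (z - a) * Complex.normSq (z - b)
      = (‖z - a‖ * ‖z - b‖) ^ 2 := by
    rw [Complex.normSq_eq_norm_sq, Complex.normSq_eq_norm_sq]
    ring
  rw [Ff, abs_div, hden, abs_of_nonneg (by positivity : (0:ℝ) ≤ (‖z - a‖ * ‖z - b‖) ^ 2)]
  rw [div_le_iff₀ (by positivity)]
  have hu : ‖z - a‖ * ‖z - b‖ ≠ 0 := by positivity
  have heq : (‖z - a‖ * ‖z - b‖)⁻¹ * (‖z - a‖ * ‖z - b‖) ^ 2 = ‖z - a‖ * ‖z - b‖ := by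
    rw [sq, ← mul_assoc, inv_mul_cancel₀ hu, one_mul]
  rw [heq]
  exact hnum

lemma abs_Ff_le_maj {a b : ℂ} (hab : a ≠ b) (z : ℂ) :
    |Ff a b z| ≤ 2 / ‖a - b‖ * (‖z - a‖⁻¹ + ‖z - b‖⁻¹) := by
  have hr : 0 < ‖a - b‖ := by simpa [norm_pos_iff, sub_eq_zero] using hab
  refine (abs_Ff_le a b z).trans ?_
  set x := ‖z - a‖; set y := ‖z - b‖
  have hx : 0 ≤ x := norm_nonneg _
  have hy : 0 ≤ y := norm_nonneg _
  have hxy : ‖a - b‖ ≤ x + y := by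
    calc ‖a - b‖ = ‖(a - z) + (z - b)‖ := by ring_nf
      _ ≤ ‖a - z‖ + ‖z - b‖ := norm_add_le _ _
      _ = x + y := by rw [norm_sub_rev]
  rcases eq_or_lt_of_le hx with hx0 | hx0
  · rw [← hx0, zero_mul, inv_zero]; positivity
  rcases eq_or_lt_of_le hy with hy0 | hy0
  · rw [← hy0, mul_zero, inv_zero]; positivity
  rw [mul_inv]
  rw [div_mul_eq_mul_div, le_div_iff₀ hr]
  have key : ‖a - b‖ ≤ 2 * (x * y) * (x⁻¹ + y⁻¹) := by
    have : x * y * (x⁻¹ + y⁻¹) = y + x := by field_simp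
    nlinarith
  calc x⁻¹ * y⁻¹ * ‖a - b‖ ≤ x⁻¹ * y⁻¹ * (2 * (x * y) * (x⁻¹ + y⁻¹)) := by
        apply mul_le_mul_of_nonneg_left key (by positivity)
    _ = 2 * (x⁻¹ + y⁻¹) := by field_simp

lemma integrableOn_maj {a b : ℂ} {R : ℝ} (hR : 0 < R) {s : Set ℂ}
    (hsa : s ⊆ ball a R) (hsb : s ⊆ ball b R) (r : ℝ) :
    IntegrableOn (fun z : ℂ => 2 / r * (‖z - a‖⁻¹ + ‖z - b‖⁻¹)) s :=
  (((integrableOn_inv_norm_subset hR hsa).add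
    (integrableOn_inv_norm_subset hR hsb)).const_mul _)

lemma integrableOn_Ff {a b : ℂ} (hab : a ≠ b) {R : ℝ} (hR : 0 < R) {s : Set ℂ}
    (hsa : s ⊆ ball a R) (hsb : s ⊆ ball b R) :
    IntegrableOn (Ff a b) s := by
  refine Integrable.mono' (integrableOn_maj hR hsa hsb ‖a - b‖)
    (measurable_Ff a b).aestronglyMeasurable
    (ae_of_all _ fun z => ?_)
  simpa [Real.norm_eq_abs] using abs_Ff_le_maj hab z

lemma abs_setIntegral_Ff_le {a b : ℂ} (hab : a ≠ b) {R : ℝ} (hR : 0 < R) {s : Set ℂ}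
    (hs : MeasurableSet s) (hsa : s ⊆ ball a R) (hsb : s ⊆ ball b R) :
    |∫ z in s, Ff a b z| ≤ 2 / ‖a - b‖ * (4 * π * R) := by
  have hint := integrableOn_Ff hab hR hsa hsb
  have h1 : |∫ z in s, Ff a b z| ≤ ∫ z in s, |Ff a b z| := by
    simpa [Real.norm_eq_abs] using
      norm_integral_le_integral_norm (μ := volume.restrict s) (Ff a b)
  refine h1.trans ?_
  have h2 : ∫ z in s, |Ff a b z| ≤ ∫ z in s, 2 / ‖a - b‖ * (‖z - a‖⁻¹ + ‖z - b‖⁻¹) :=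
    setIntegral_mono_on hint.abs (integrableOn_maj hR hsa hsb _) hs
      (fun z _ => abs_Ff_le_maj hab z)
  refine h2.trans ?_
  rw [MeasureTheory.integral_const_mul]
  have h3 : ∫ z in s, (‖z - a‖⁻¹ + ‖z - b‖⁻¹)
      = (∫ z in s, ‖z - a‖⁻¹) + ∫ z in s, ‖z - b‖⁻¹ :=
    integral_add (integrableOn_inv_norm_subset hR hsa) (integrableOn_inv_norm_subset hR hsb)
  rw [h3]
  have h4 : (∫ z in s, ‖z - a‖⁻¹) + (∫ z in s, ‖z - b‖⁻¹) ≤ 2 * π * R + 2 * π * R :=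
    add_le_add (setIntegral_inv_norm_le hR hs hsa) (setIntegral_inv_norm_le hR hs hsb)
  calc 2 / ‖a - b‖ * ((∫ z in s, ‖z - a‖⁻¹) + ∫ z in s, ‖z - b‖⁻¹)
      ≤ 2 / ‖a - b‖ * (2 * π * R + 2 * π * R) := by
        apply mul_le_mul_of_nonneg_left h4 (by positivity)
    _ = 2 / ‖a - b‖ * (4 * π * R) := by ring

lemma abs_setIntegral_Ff_le_far {a b : ℂ} {R m : ℝ} (hR : 0 < R) (hm : 0 < m) {s : Set ℂ}
    (hs : MeasurableSet s) (hsa : s ⊆ ball a R) (hfar : ∀ z ∈ s, m ≤ ‖z - b‖) :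
    |∫ z in s, Ff a b z| ≤ m⁻¹ * (2 * π * R) := by
  have hmaj : IntegrableOn (fun z : ℂ => m⁻¹ * ‖z - a‖⁻¹) s :=
    (integrableOn_inv_norm_subset hR hsa).const_mul _
  have hbd : ∀ z ∈ s, |Ff a b z| ≤ m⁻¹ * ‖z - a‖⁻¹ := by
    intro z hz
    refine (abs_Ff_le a b z).trans ?_
    rw [mul_inv]
    rw [mul_comm]
    apply mul_le_mul_of_nonneg_right _ (inv_nonneg.2 (norm_nonneg _))
    exact inv_anti₀ hm (hfar z hz)
  have hint : IntegrableOn (Ff a b) s := by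
    refine Integrable.mono' hmaj (measurable_Ff a b).aestronglyMeasurable ?_
    refine (ae_restrict_iff' hs).2 (ae_of_all _ fun z hz => ?_)
    simpa [Real.norm_eq_abs] using hbd z hz
  have h1 : |∫ z in s, Ff a b z| ≤ ∫ z in s, |Ff a b z| := by
    simpa [Real.norm_eq_abs] using
      norm_integral_le_integral_norm (μ := volume.restrict s) (Ff a b)
  refine h1.trans ?_
  have h2 : ∫ z in s, |Ff a b z| ≤ ∫ z in s, m⁻¹ * ‖z - a‖⁻¹ :=
    setIntegral_mono_on hint.abs hmaj hs hbd
  refine h2.trans ?_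
  rw [MeasureTheory.integral_const_mul]
  exact mul_le_mul_of_nonneg_left (setIntegral_inv_norm_le hR hs hsa) (by positivity)

lemma circle_inner {t : ℝ} (ht : 0 < t) {c : ℂ} (hc : ‖c‖ < t) :
    ∫ θ in (-π)..π,
        (((t:ℂ) * Complex.exp (θ * Complex.I) - c)⁻¹
          * (conj ((t:ℂ) * Complex.exp (θ * Complex.I)))⁻¹).re
      = 2 * π / t ^ 2 := by
  set h : ℝ → ℂ := fun θ =>
    (((t:ℂ) * Complex.exp (θ * Complex.I) - c)⁻¹
      * (conj ((t:ℂ) * Complex.exp (θ * Complex.I)))⁻¹) with hh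
  have habs : ∀ θ : ℝ, ‖(t:ℂ) * Complex.exp (θ * Complex.I)‖ = t := by
    intro θ
    rw [norm_mul, Complex.norm_exp]
    simp [abs_of_pos ht]
  have hne : ∀ θ : ℝ, (t:ℂ) * Complex.exp (θ * Complex.I) - c ≠ 0 := by
    intro θ hzero
    rw [sub_eq_zero] at hzero
    have h1 : ‖c‖ = t := by rw [← hzero, habs θ]
    exact absurd h1 hc.ne
  have hne2 : ∀ θ : ℝ, conj ((t:ℂ) * Complex.exp (θ * Complex.I)) ≠ 0 := by
    intro θ
    simp only [ne_eq, map_eq_zero, mul_eq_zero, Complex.ofReal_eq_zero, not_or]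
    exact ⟨ht.ne', Complex.exp_ne_zero _⟩
  have hcont1 : Continuous fun θ : ℝ => (t:ℂ) * Complex.exp (θ * Complex.I) := by
    continuity
  have hcont : Continuous h := by
    refine Continuous.mul ?_ ?_
    · exact (hcont1.sub continuous_const).inv₀ hne
    · exact (Complex.continuous_conj.comp hcont1).inv₀ hne2
  have hper : Function.Periodic h (2 * π) := by
    intro θ
    have harg : ((θ + 2 * π : ℝ) : ℂ) * Complex.I = θ * Complex.I + 2 * π * Complex.I := by
      push_cast; ring
    simp only [hh, harg, Complex.exp_add, Complex.exp_two_pi_mul_I, mul_one]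
  have hcirc : (∮ z in C(0, t), (z - c)⁻¹) = 2 * π * Complex.I :=
    circleIntegral.integral_sub_inv_of_mem_ball (by
      simp only [mem_ball, Complex.dist_eq, sub_zero]
      exact hc)
  have hexpand : (∮ z in C(0, t), (z - c)⁻¹)
      = ∫ θ in (0:ℝ)..2*π, Complex.I * t ^ 2 * h θ := by
    rw [circleIntegral]
    refine intervalIntegral.integral_congr (fun θ _ => ?_)
    have hcm : circleMap 0 t θ = (t:ℂ) * Complex.exp (θ * Complex.I) := by
      simp [circleMap]
    rw [deriv_circleMap, hcm]
    have hconj : conj ((t:ℂ) * Complex.exp (θ * Complex.I))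
        = (t:ℂ) * Complex.exp (-(θ * Complex.I)) := by
      rw [map_mul, Complex.conj_ofReal, ← Complex.exp_conj]
      congr 2
      simp
    simp only [hh, hconj, smul_eq_mul, mul_inv]
    rw [← Complex.exp_neg, neg_neg]
    have htne : (t:ℂ) ≠ 0 := Complex.ofReal_ne_zero.2 ht.ne'
    field_simp [hne θ]
  have ht' : ((t:ℂ)) ^ 2 ≠ 0 := pow_ne_zero _ (Complex.ofReal_ne_zero.2 ht.ne')
  have heq : Complex.I * (t:ℂ) ^ 2 * (∫ θ in (0:ℝ)..2*π, h θ) = 2 * π * Complex.I := by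
    rw [← intervalIntegral.integral_const_mul, ← hexpand, hcirc]
  have hval : (∫ θ in (0:ℝ)..2*π, h θ) = ((2*π/t^2 : ℝ) : ℂ) := by
    apply mul_left_cancel₀ (mul_ne_zero Complex.I_ne_zero ht')
    rw [heq]
    push_cast
    have htne : (t:ℂ) ≠ 0 := Complex.ofReal_ne_zero.2 ht.ne'
    field_simp
  have hshift : (∫ θ in (-π)..π, h θ) = ∫ θ in (0:ℝ)..2*π, h θ := by
    have h2 := hper.intervalIntegral_add_eq (-π) 0
    rw [show -π + 2*π = π by ring, zero_add] at h2
    exact h2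
  calc ∫ θ in (-π)..π, (h θ).re
      = (∫ θ in (-π)..π, h θ).re :=
        Complex.reCLM.intervalIntegral_comp_comm (hcont.intervalIntegrable _ _)
    _ = 2 * π / t ^ 2 := by rw [hshift, hval, Complex.ofReal_re]

lemma Ff_shift (b c w : ℂ) : Ff (b + c) b (b + w) = ((w - c)⁻¹ * (conj w)⁻¹).re := by
  have e1 : b + w - (b + c) = w - c := by ring
  have e2 : b + w - b = w := by ring
  rw [Ff, e1, e2, Complex.inv_def, Complex.inv_def, Complex.normSq_conj, Complex.conj_conj]
  rw [show (starRingEnd ℂ) (w - c) * ((((Complex.normSq (w - c))⁻¹ : ℝ)) : ℂ)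
        * (w * ((((Complex.normSq w)⁻¹ : ℝ)) : ℂ))
      = (((((Complex.normSq (w - c) * Complex.normSq w)⁻¹ : ℝ))) : ℂ)
        * ((starRingEnd ℂ) (w - c) * w) from by push_cast; ring]
  rw [Complex.re_ofReal_mul, div_eq_inv_mul]

lemma integral_annulus {b c : ℂ} {r0 rr : ℝ} (h0 : 0 < r0) (hc : ‖c‖ < r0) (hr : r0 ≤ rr) :
    ∫ z in (closedBall b rr \ ball b r0), Ff (b + c) b z
      = 2 * π * (Real.log rr - Real.log r0) := by
  have hg : ∀ w : ℂ, Ff (b + c) b (b + w) = ((w - c)⁻¹ * (conj w)⁻¹).re := Ff_shift b c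
  set g : ℂ → ℝ := fun w => ((w - c)⁻¹ * (conj w)⁻¹).re with hgdef
  set A : Set ℂ := closedBall 0 rr \ ball 0 r0 with hA
  have hAmeas : MeasurableSet A := measurableSet_closedBall.diff measurableSet_ball
  have hpre : (fun x : ℂ => b + x) ⁻¹' (closedBall b rr \ ball b r0) = A := by
    ext z
    simp [hA, Complex.dist_eq, mem_closedBall, mem_ball, add_sub_cancel_left]
  have htrans : ∫ z in (closedBall b rr \ ball b r0), Ff (b + c) b z
      = ∫ w in A, g w := by
    rw [← (measurePreserving_add_left volume b).setIntegral_preimage_emb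
      (measurableEmbedding_addLeft b) (Ff (b + c) b) _, hpre]
    exact setIntegral_congr_fun hAmeas fun w _ => hg w
  rw [htrans]
  rw [← MeasureTheory.integral_indicator hAmeas]
  rw [← Complex.integral_comp_polarCoord_symm (A.indicator g)]
  have hstep3 : ∫ p in polarCoord.target, p.1 • A.indicator g (Complex.polarCoord.symm p)
      = ∫ p in polarCoord.target,
          (Icc r0 rr ×ˢ (univ : Set ℝ)).indicator
            (fun p : ℝ × ℝ => p.1 • g (Complex.polarCoord.symm p)) p := by
    refine setIntegral_congr_fun (polarCoord.open_target.measurableSet) fun p hp => ?_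
    rw [polarCoord_target] at hp
    have habs : ‖Complex.polarCoord.symm p‖ = p.1 := by
      rw [Complex.norm_polarCoord_symm, abs_of_pos hp.1]
    have hmem : Complex.polarCoord.symm p ∈ A ↔ p ∈ Icc r0 rr ×ˢ (univ : Set ℝ) := by
      simp only [hA, mem_diff, mem_closedBall, mem_ball, Complex.dist_eq, sub_zero,
        mem_prod, mem_univ, and_true, mem_Icc, habs, not_lt]
      exact and_comm
    by_cases hmem' : Complex.polarCoord.symm p ∈ A
    · rw [indicator_of_mem hmem' g, indicator_of_mem (hmem.1 hmem')]
    · rw [indicator_of_notMem hmem' g, indicator_of_notMem (fun hp' => hmem' (hmem.2 hp'))]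
      simp
  rw [hstep3, setIntegral_indicator (measurableSet_Icc.prod MeasurableSet.univ)]
  have hinter : polarCoord.target ∩ (Icc r0 rr ×ˢ (univ : Set ℝ))
      = Icc r0 rr ×ˢ Ioo (-π) π := by
    rw [polarCoord_target, Set.prod_inter_prod, Set.inter_univ]
    congr 1
    ext x
    simp only [mem_inter_iff, mem_Ioi, mem_Icc]
    constructor
    · rintro ⟨h1, h2⟩; exact h2
    · intro h2; exact ⟨lt_of_lt_of_le h0 h2.1, h2⟩
  rw [hinter]
  -- Fubini
  have hsymm : Continuous (fun p : ℝ × ℝ => Complex.polarCoord.symm p) := by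
    have : (fun p : ℝ × ℝ => Complex.polarCoord.symm p)
        = fun p : ℝ × ℝ => (p.1 : ℂ) * (Real.cos p.2 + Real.sin p.2 * Complex.I) := by
      funext p; exact Complex.polarCoord_symm_apply p
    rw [this]
    exact (Complex.continuous_ofReal.comp continuous_fst).mul
      ((Complex.continuous_ofReal.comp (Real.continuous_cos.comp continuous_snd)).add
        ((Complex.continuous_ofReal.comp (Real.continuous_sin.comp continuous_snd)).mul
          continuous_const))
  have hcont : ContinuousOn (fun p : ℝ × ℝ => p.1 • g (Complex.polarCoord.symm p))
      (Icc r0 rr ×ˢ Icc (-π) π) := by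
    have habs : ∀ p ∈ Icc r0 rr ×ˢ Icc (-π) π,
        ‖Complex.polarCoord.symm p‖ = p.1 := fun p hp => by
      rw [Complex.norm_polarCoord_symm, abs_of_pos (lt_of_lt_of_le h0 hp.1.1)]
    have hne1 : ∀ p ∈ Icc r0 rr ×ˢ Icc (-π) π, Complex.polarCoord.symm p - c ≠ 0 := by
      intro p hp hzero
      rw [sub_eq_zero] at hzero
      have h1 := habs p hp
      rw [hzero] at h1
      have h2 : r0 ≤ p.1 := hp.1.1
      rw [h1] at hc
      linarith
    have hne2 : ∀ p ∈ Icc r0 rr ×ˢ Icc (-π) π, conj (Complex.polarCoord.symm p) ≠ 0 := by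
      intro p hp
      rw [ne_eq, map_eq_zero]
      intro hzero
      have h1 := habs p hp
      rw [hzero, norm_zero] at h1
      have h2 : r0 ≤ p.1 := hp.1.1
      linarith
    have h1 : ContinuousOn (fun p : ℝ × ℝ => (Complex.polarCoord.symm p - c)⁻¹)
        (Icc r0 rr ×ˢ Icc (-π) π) :=
      ((hsymm.continuousOn.sub continuousOn_const).inv₀ hne1)
    have h2 : ContinuousOn (fun p : ℝ × ℝ => (conj (Complex.polarCoord.symm p))⁻¹)
        (Icc r0 rr ×ˢ Icc (-π) π) :=
      ((Complex.continuous_conj.comp_continuousOn hsymm.continuousOn).inv₀ hne2)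
    exact continuousOn_fst.smul (Complex.continuous_re.comp_continuousOn (h1.mul h2))
  have hint : IntegrableOn (fun p : ℝ × ℝ => p.1 • g (Complex.polarCoord.symm p))
      (Icc r0 rr ×ˢ Ioo (-π) π) :=
    (hcont.integrableOn_compact (isCompact_Icc.prod isCompact_Icc)).mono_set
      (prod_mono_right Ioo_subset_Icc_self)
  rw [Measure.volume_eq_prod]
  rw [MeasureTheory.setIntegral_prod _ (by rwa [← Measure.volume_eq_prod])]
  have hinner : ∀ t ∈ Icc r0 rr,
      (∫ θ in Ioo (-π) π, t • g (Complex.polarCoord.symm (t, θ))) = 2 * π / t := by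
    intro t htmem
    have ht0 : 0 < t := lt_of_lt_of_le h0 htmem.1
    have hsymm2 : ∀ θ : ℝ, Complex.polarCoord.symm (t, θ)
        = (t:ℂ) * Complex.exp (θ * Complex.I) := by
      intro θ
      rw [Complex.polarCoord_symm_apply, Complex.exp_mul_I, ← Complex.ofReal_cos,
        ← Complex.ofReal_sin]
    calc ∫ θ in Ioo (-π) π, t • g (Complex.polarCoord.symm (t, θ))
        = ∫ θ in Ioo (-π) π, t * (((t:ℂ) * Complex.exp (θ * Complex.I) - c)⁻¹
            * (conj ((t:ℂ) * Complex.exp (θ * Complex.I)))⁻¹).re := by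
          refine setIntegral_congr_fun measurableSet_Ioo fun θ _ => ?_
          rw [smul_eq_mul, hsymm2 θ]
      _ = ∫ θ in (-π)..π, t * (((t:ℂ) * Complex.exp (θ * Complex.I) - c)⁻¹
            * (conj ((t:ℂ) * Complex.exp (θ * Complex.I)))⁻¹).re := by
          rw [intervalIntegral.integral_of_le (by linarith [pi_pos]),
            MeasureTheory.integral_Ioc_eq_integral_Ioo]
      _ = t * (2 * π / t ^ 2) := by
          rw [intervalIntegral.integral_const_mul,
            circle_inner ht0 (lt_of_lt_of_le hc htmem.1)]
      _ = 2 * π / t := by field_simp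
  rw [setIntegral_congr_fun measurableSet_Icc hinner]
  rw [MeasureTheory.integral_Icc_eq_integral_Ioc, ← intervalIntegral.integral_of_le hr]
  have hrw : ∀ t : ℝ, 2 * π / t = (2 * π) * (1 / t) := fun t => by ring
  simp_rw [hrw]
  rw [intervalIntegral.integral_const_mul]
  have h0uIcc : (0:ℝ) ∉ Set.uIcc r0 rr := by
    rw [Set.uIcc_of_le hr]
    rintro ⟨h1, h2⟩
    linarith
  rw [integral_one_div h0uIcc, Real.log_div (by linarith : rr ≠ 0) h0.ne']

lemma main_complex {Ωc : Set ℂ} (hmeas : MeasurableSet Ωc) {RΩ : ℝ} (hRΩ : 0 < RΩ)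
    (hsub : Ωc ⊆ ball 0 RΩ) {δ : ℝ} (hδ : 0 < δ) {a b : ℂ} (ha : a ∈ Ωc) (hb : b ∈ Ωc)
    (hab : a ≠ b) (hballs : closedBall b (δ/2) ⊆ Ωc) :
    |(∫ z in Ωc, Ff a b z) - 2 * π * Real.log (1 / ‖a - b‖)|
      ≤ (128 * π * RΩ / δ + 2 * π * (|Real.log (δ/8)| + |Real.log (2*RΩ)|))
        + (24 * π + 2 * π * |Real.log (δ/4)| + 8 * π * RΩ / δ) := by
  set r : ℝ := ‖a - b‖ with hrdef
  have hr : 0 < r := by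
    simpa [hrdef, norm_pos_iff, sub_eq_zero] using hab
  have hΩa : Ωc ⊆ ball a (2 * RΩ) := by
    intro z hz
    have h1 : ‖z‖ < RΩ := by simpa [mem_ball, Complex.dist_eq] using hsub hz
    have h2 : ‖a‖ < RΩ := by simpa [mem_ball, Complex.dist_eq] using hsub ha
    have : ‖z - a‖ ≤ ‖z‖ + ‖a‖ := norm_sub_le _ _
    simp only [mem_ball, Complex.dist_eq]
    linarith
  have hΩb : Ωc ⊆ ball b (2 * RΩ) := by
    intro z hz
    have h1 : ‖z‖ < RΩ := by simpa [mem_ball, Complex.dist_eq] using hsub hz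
    have h2 : ‖b‖ < RΩ := by simpa [mem_ball, Complex.dist_eq] using hsub hb
    have : ‖z - b‖ ≤ ‖z‖ + ‖b‖ := norm_sub_le _ _
    simp only [mem_ball, Complex.dist_eq]
    linarith
  have hrub : r ≤ 2 * RΩ := by
    have h2 : ‖a‖ < RΩ := by simpa [mem_ball, Complex.dist_eq] using hsub ha
    have h3 : ‖b‖ < RΩ := by simpa [mem_ball, Complex.dist_eq] using hsub hb
    have : ‖a - b‖ ≤ ‖a‖ + ‖b‖ := norm_sub_le _ _
    rw [hrdef]; linarith
  have hC2 : (0:ℝ) ≤ 24 * π + 2 * π * |Real.log (δ/4)| + 8 * π * RΩ / δ := by positivity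
  have hC1 : (0:ℝ) ≤ 128 * π * RΩ / δ + 2 * π * (|Real.log (δ/8)| + |Real.log (2*RΩ)|) := by
    positivity
  have hlog1r : Real.log (1 / r) = - Real.log r := by
    rw [one_div, Real.log_inv]
  rcases le_or_gt (δ/8) r with hcase | hcase
  · -- far case
    have hI : |∫ z in Ωc, Ff a b z| ≤ 2 / r * (4 * π * (2 * RΩ)) :=
      abs_setIntegral_Ff_le hab (by positivity) hmeas hΩa hΩb
    have hI2 : 2 / r * (4 * π * (2 * RΩ)) ≤ 128 * π * RΩ / δ := by
      rw [div_mul_eq_mul_div, div_le_div_iff₀ hr hδ]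
      have h8 : δ ≤ 8 * r := by linarith
      nlinarith [mul_nonneg (mul_pos pi_pos hRΩ).le (show (0:ℝ) ≤ 8*r - δ by linarith)]
    have hlogr : |Real.log r| ≤ |Real.log (δ/8)| + |Real.log (2*RΩ)| := by
      have h1 : Real.log (δ/8) ≤ Real.log r := Real.log_le_log (by positivity) hcase
      have h2 : Real.log r ≤ Real.log (2*RΩ) := Real.log_le_log hr hrub
      rw [abs_le]
      constructor
      · have := neg_abs_le (Real.log (δ/8))
        have := abs_nonneg (Real.log (2*RΩ))
        linarith
      · have := le_abs_self (Real.log (2*RΩ))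
        have := abs_nonneg (Real.log (δ/8))
        linarith
    calc |(∫ z in Ωc, Ff a b z) - 2 * π * Real.log (1 / r)|
        ≤ |∫ z in Ωc, Ff a b z| + |2 * π * Real.log (1 / r)| := abs_sub _ _
      _ ≤ 128 * π * RΩ / δ + 2 * π * (|Real.log (δ/8)| + |Real.log (2*RΩ)|) := by
          have habs : |2 * π * Real.log (1 / r)| = 2 * π * |Real.log r| := by
            rw [abs_mul, hlog1r, abs_neg, abs_of_pos (by positivity : (0:ℝ) < 2 * π)]
          rw [habs]
          have := mul_le_mul_of_nonneg_left hlogr (by positivity : (0:ℝ) ≤ 2 * π)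
          linarith
      _ ≤ _ := le_add_of_nonneg_right hC2
  · -- near case
    set s1 : Set ℂ := ball b (2*r) with hs1
    set s2 : Set ℂ := closedBall b (δ/2) \ ball b (2*r) with hs2
    set s3 : Set ℂ := Ωc \ closedBall b (δ/2) with hs3
    have hball_sub : ball b (2*r) ⊆ closedBall b (δ/2) :=
      (ball_subset_closedBall).trans (closedBall_subset_closedBall (by linarith))
    have hsplit1 : s1 ∪ s2 = closedBall b (δ/2) := union_diff_cancel hball_sub
    have hsplit2 : closedBall b (δ/2) ∪ s3 = Ωc := union_diff_cancel hballs
    have hs1sub : s1 ⊆ Ωc := hball_sub.trans hballs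
    have hs2sub : s2 ⊆ Ωc := (diff_subset).trans hballs
    have hs3sub : s3 ⊆ Ωc := diff_subset
    have hint1 : IntegrableOn (Ff a b) s1 :=
      integrableOn_Ff hab (by positivity : (0:ℝ) < 2*RΩ)
        ((hs1sub).trans hΩa) ((hs1sub).trans hΩb)
    have hint2 : IntegrableOn (Ff a b) s2 :=
      integrableOn_Ff hab (by positivity : (0:ℝ) < 2*RΩ)
        ((hs2sub).trans hΩa) ((hs2sub).trans hΩb)
    have hint3 : IntegrableOn (Ff a b) s3 :=
      integrableOn_Ff hab (by positivity : (0:ℝ) < 2*RΩ)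
        ((hs3sub).trans hΩa) ((hs3sub).trans hΩb)
    have hIsum : ∫ z in Ωc, Ff a b z
        = (∫ z in s1, Ff a b z) + (∫ z in s2, Ff a b z) + (∫ z in s3, Ff a b z) := by
      have e1 : ∫ z in s1 ∪ s2, Ff a b z
          = (∫ z in s1, Ff a b z) + (∫ z in s2, Ff a b z) :=
        setIntegral_union (disjoint_sdiff_self_right) (measurableSet_closedBall.diff
          measurableSet_ball) hint1 hint2
      have e2 : ∫ z in (closedBall b (δ/2)) ∪ s3, Ff a b z
          = (∫ z in closedBall b (δ/2), Ff a b z) + (∫ z in s3, Ff a b z) :=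
        setIntegral_union (disjoint_sdiff_self_right) (hmeas.diff measurableSet_closedBall)
          ((hint1.union hint2).mono_set (by rw [hsplit1])) hint3
      rw [← hsplit2, e2, ← hsplit1, e1]
    -- piece 1
    have hI1 : |∫ z in s1, Ff a b z| ≤ 24 * π := by
      have hsa : s1 ⊆ ball a (3*r) := by
        intro z hz
        simp only [hs1, mem_ball, Complex.dist_eq] at hz ⊢
        have h1 : ‖z - a‖ ≤ ‖z - b‖ + ‖b - a‖ := by
          calc ‖z - a‖ = ‖(z - b) + (b - a)‖ := by ring_nf
            _ ≤ ‖z - b‖ + ‖b - a‖ := norm_add_le _ _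
        have h2 : ‖b - a‖ = r := by rw [hrdef, norm_sub_rev]
        linarith
      have hsb : s1 ⊆ ball b (3*r) := ball_subset_ball (by linarith)
      have := abs_setIntegral_Ff_le hab (by positivity : (0:ℝ) < 3*r)
        measurableSet_ball hsa hsb
      calc |∫ z in s1, Ff a b z| ≤ 2 / r * (4 * π * (3*r)) := this
        _ = 24 * π := by field_simp; ring
    -- piece 2
    have hI2 : ∫ z in s2, Ff a b z = 2 * π * (Real.log (δ/2) - Real.log (2*r)) := by
      have hba : b + (a - b) = a := by ring
      have := integral_annulus (b := b) (c := a - b) (r0 := 2*r) (rr := δ/2)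
        (by positivity) (by rw [← hrdef]; linarith) (by linarith)
      rwa [hba] at this
    -- piece 3
    have hI3 : |∫ z in s3, Ff a b z| ≤ (δ/2)⁻¹ * (2 * π * (2*RΩ)) := by
      refine abs_setIntegral_Ff_le_far (by positivity : (0:ℝ) < 2*RΩ) (by positivity)
        (hmeas.diff measurableSet_closedBall) ((hs3sub).trans hΩa) ?_
      intro z hz
      have : z ∉ closedBall b (δ/2) := hz.2
      simp only [mem_closedBall, Complex.dist_eq, not_le] at this
      linarith
    have hI3' : |∫ z in s3, Ff a b z| ≤ 8 * π * RΩ / δ := by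
      refine hI3.trans (le_of_eq ?_)
      field_simp
      ring
    -- combine
    have hkey : (∫ z in s2, Ff a b z) - 2 * π * Real.log (1/r) = 2 * π * Real.log (δ/4) := by
      rw [hI2, hlog1r]
      have h2r : Real.log (2*r) = Real.log 2 + Real.log r :=
        Real.log_mul (by norm_num) hr.ne'
      have h24 : Real.log (δ/2) - Real.log 2 = Real.log (δ/4) := by
        rw [← Real.log_div (by positivity : δ/2 ≠ 0) (by norm_num : (2:ℝ) ≠ 0)]
        congr 1
        ring
      rw [h2r]
      linear_combination (2*π) * h24
    calc |(∫ z in Ωc, Ff a b z) - 2 * π * Real.log (1 / r)|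
        = |(∫ z in s1, Ff a b z) + ((∫ z in s2, Ff a b z) - 2 * π * Real.log (1/r))
            + (∫ z in s3, Ff a b z)| := by rw [hIsum]; congr 1; ring
      _ ≤ |(∫ z in s1, Ff a b z) + ((∫ z in s2, Ff a b z) - 2 * π * Real.log (1/r))|
            + |∫ z in s3, Ff a b z| := abs_add_le _ _
      _ ≤ |∫ z in s1, Ff a b z| + |(∫ z in s2, Ff a b z) - 2 * π * Real.log (1/r)|
            + |∫ z in s3, Ff a b z| := by
          have := abs_add_le (∫ z in s1, Ff a b z)
            ((∫ z in s2, Ff a b z) - 2 * π * Real.log (1/r))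
          linarith
      _ ≤ 24 * π + 2 * π * |Real.log (δ/4)| + 8 * π * RΩ / δ := by
          rw [hkey]
          have habs : |2 * π * Real.log (δ/4)| = 2 * π * |Real.log (δ/4)| := by
            rw [abs_mul, abs_of_pos (by positivity : (0:ℝ) < 2 * π)]
          rw [habs]
          linarith [hI1, hI3']
      _ ≤ _ := le_add_of_nonneg_left hC1

lemma dot_dis (b1 b2 : ℝ) (a b w : ℂ) :
    dot (dis b1 (a.re, a.im) (w.re, w.im)) (dis b2 (b.re, b.im) (w.re, w.im))
    = b1 * b2 / (4 * π ^ 2) * Ff a b w := by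
  have hFf : Ff a b w = ((w.re - a.re) * (w.re - b.re) + (w.im - a.im) * (w.im - b.im))
      / ((((w.re - a.re)^2 + (w.im - a.im)^2)) * (((w.re - b.re)^2 + (w.im - b.im)^2))) := by
    rw [Ff]
    simp only [Complex.mul_re, Complex.conj_re, Complex.conj_im, Complex.sub_re,
      Complex.sub_im, Complex.normSq_apply]
    ring_nf
  rw [hFf]
  simp only [dot, dis, perp, Prod.fst_sub, Prod.snd_sub, Prod.smul_mk, smul_eq_mul]
  set X1 := w.re - a.re with hX1
  set Y1 := w.im - a.im with hY1
  set X2 := w.re - b.re with hX2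
  set Y2 := w.im - b.im with hY2
  rcases eq_or_ne (X1^2 + Y1^2) 0 with h1 | h1
  · have hx : X1 = 0 := by nlinarith [sq_nonneg X1, sq_nonneg Y1]
    have hy : Y1 = 0 := by nlinarith [sq_nonneg X1, sq_nonneg Y1]
    simp [hx, hy]
  rcases eq_or_ne (X2^2 + Y2^2) 0 with h2 | h2
  · have hx : X2 = 0 := by nlinarith [sq_nonneg X2, sq_nonneg Y2]
    have hy : Y2 = 0 := by nlinarith [sq_nonneg X2, sq_nonneg Y2]
    simp [hx, hy]
  have hπ : (π : ℝ) ≠ 0 := pi_ne_zero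
  field_simp
  ring

lemma integrand_eq (C K R bui bwi buj bwj : ℝ) (a b w : ℂ) :
    C * dot (dis bui (a.re, a.im) (w.re, w.im)) (dis buj (b.re, b.im) (w.re, w.im))
      + K * dot (dis bwi (a.re, a.im) (w.re, w.im)) (dis bwj (b.re, b.im) (w.re, w.im))
      + R * dot (dis bui (a.re, a.im) (w.re, w.im)) (dis bwj (b.re, b.im) (w.re, w.im))
      + R * dot (dis buj (b.re, b.im) (w.re, w.im)) (dis bwi (a.re, a.im) (w.re, w.im)) 
    = (C * bui * buj + K * bwi * bwj + R * bui * bwj + R * bwi * buj) / (4 * π ^ 2)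
        * Ff a b w := by
  have h4 : dot (dis buj (b.re, b.im) (w.re, w.im)) (dis bwi (a.re, a.im) (w.re, w.im))
      = dot (dis bwi (a.re, a.im) (w.re, w.im)) (dis buj (b.re, b.im) (w.re, w.im)) := by
    simp only [dot]; ring
  rw [dot_dis, dot_dis, dot_dis, h4, dot_dis]
  ring

/-- Interaction energy law: the interaction energy of two dislocations
equals `((C b_u^i b_u^j + K b_w^i b_w^j + R b_u^i b_w^j + R b_w^i b_u^j)/(2π)) ln(1/|d_i−d_j|)`
up to an `O(1)` term bounded uniformly over configurations staying at distance `≥ δ`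
from `∂Ω`. -/
theorem stmt14 (C K R : ℝ) (hC : 0 < C) (hK : 0 < K) (hCK : R ^ 2 < C * K)
    (Ω : Set (ℝ × ℝ)) (hΩo : IsOpen Ω) (hΩb : Bornology.IsBounded Ω)
    (bui bwi buj bwj : ℝ) (δ : ℝ) (hδ : 0 < δ) :
    ∃ M : ℝ, ∀ di dj : ℝ × ℝ, di ∈ Ω → dj ∈ Ω → di ≠ dj →
      δ ≤ Metric.infDist di Ωᶜ → δ ≤ Metric.infDist dj Ωᶜ →
      |(∫ z in Ω, (C * dot (dis bui di z) (dis buj dj z)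
            + K * dot (dis bwi di z) (dis bwj dj z)
            + R * dot (dis bui di z) (dis bwj dj z)
            + R * dot (dis buj dj z) (dis bwi di z)))
        - (C * bui * buj + K * bwi * bwj + R * bui * bwj + R * bwi * buj) / (2 * π)
            * Real.log (1 / dist di dj)| ≤ M := by
  obtain ⟨r₀, hr₀pos, hr₀⟩ := hΩb.subset_ball_lt 0 0
  set S : ℝ := (C * bui * buj + K * bwi * bwj + R * bui * bwj + R * bwi * buj) / (4 * π ^ 2)
    with hS
  set RΩ : ℝ := 2 * r₀ with hRΩdef
  have hRΩ : 0 < RΩ := by positivity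
  set Ωc : Set ℂ := Complex.measurableEquivRealProd ⁻¹' Ω with hΩc
  have hmeasc : MeasurableSet Ωc :=
    hΩo.measurableSet.preimage Complex.measurableEquivRealProd.measurable
  have hnorm_prod : ∀ w : ℂ, dist (Complex.measurableEquivRealProd w) 0
      = max |w.re| |w.im| := by
    intro w
    rw [Prod.dist_eq]
    simp [Complex.measurableEquivRealProd_apply, Real.dist_eq]
  have hsubc : Ωc ⊆ ball (0:ℂ) RΩ := by
    intro w hw
    have h2 := hr₀ hw
    rw [mem_ball] at h2
    rw [hnorm_prod w] at h2
    rw [mem_ball, Complex.dist_eq, sub_zero]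
    calc ‖w‖ ≤ |w.re| + |w.im| := Complex.norm_le_abs_re_add_abs_im w
      _ ≤ max |w.re| |w.im| + max |w.re| |w.im| :=
          add_le_add (le_max_left _ _) (le_max_right _ _)
      _ < RΩ := by rw [hRΩdef]; linarith
  set Mc : ℝ := (128 * π * RΩ / δ + 2 * π * (|Real.log (δ/8)| + |Real.log (2*RΩ)|))
      + (24 * π + 2 * π * |Real.log (δ/4)| + 8 * π * RΩ / δ) with hMc
  refine ⟨|S| * (Mc + 2 * π * Real.log 2), ?_⟩
  intro di dj hdi hdj hne hdisti hdistj
  set a : ℂ := Complex.measurableEquivRealProd.symm di with ha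
  set b : ℂ := Complex.measurableEquivRealProd.symm dj with hb
  have hare : a.re = di.1 := by rw [ha, Complex.measurableEquivRealProd_symm_apply]
  have haim : a.im = di.2 := by rw [ha, Complex.measurableEquivRealProd_symm_apply]
  have hbre : b.re = dj.1 := by rw [hb, Complex.measurableEquivRealProd_symm_apply]
  have hbim : b.im = dj.2 := by rw [hb, Complex.measurableEquivRealProd_symm_apply]
  have hdi' : di = (a.re, a.im) := by rw [hare, haim]
  have hdj' : dj = (b.re, b.im) := by rw [hbre, hbim]
  have hea : Complex.measurableEquivRealProd a = di := by
    rw [ha]; exact Complex.measurableEquivRealProd.apply_symm_apply di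
  have heb : Complex.measurableEquivRealProd b = dj := by
    rw [hb]; exact Complex.measurableEquivRealProd.apply_symm_apply dj
  have hamem : a ∈ Ωc := by rw [hΩc, mem_preimage, hea]; exact hdi
  have hbmem : b ∈ Ωc := by rw [hΩc, mem_preimage, heb]; exact hdj
  have habne : a ≠ b := by
    intro h
    apply hne
    rw [← hea, ← heb, h]
  -- ball inside
  have hballs : closedBall b (δ/2) ⊆ Ωc := by
    intro w hw
    rw [mem_closedBall, Complex.dist_eq] at hw
    rw [hΩc, mem_preimage]
    by_contra hncon
    have h1 : Metric.infDist dj Ωᶜ ≤ dist dj (Complex.measurableEquivRealProd w) :=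
      Metric.infDist_le_dist_of_mem hncon
    have h2 : dist dj (Complex.measurableEquivRealProd w) ≤ ‖w - b‖ := by
      rw [dist_comm, Prod.dist_eq]
      simp only [Complex.measurableEquivRealProd_apply, Real.dist_eq]
      apply max_le
      · have := Complex.abs_re_le_norm (w - b)
        rw [Complex.sub_re, hbre] at this
        exact this
      · have := Complex.abs_im_le_norm (w - b)
        rw [Complex.sub_im, hbim] at this
        exact this
    linarith
  -- transfer the integral
  have htrans : (∫ z in Ω, (C * dot (dis bui di z) (dis buj dj z)
      + K * dot (dis bwi di z) (dis bwj dj z)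
      + R * dot (dis bui di z) (dis bwj dj z)
      + R * dot (dis buj dj z) (dis bwi di z)))
      = S * ∫ w in Ωc, Ff a b w := by
    rw [← Complex.volume_preserving_equiv_real_prod.setIntegral_preimage_emb
      Complex.measurableEquivRealProd.measurableEmbedding _ Ω]
    rw [← MeasureTheory.integral_const_mul]
    refine integral_congr_ae (Filter.EventuallyEq.of_eq (funext fun w => ?_))
    rw [Complex.measurableEquivRealProd_apply, hdi', hdj']
    exact integrand_eq C K R bui bwi buj bwj a b w
  rw [htrans]
  -- distance comparisons
  have hd0 : 0 < dist di dj := dist_pos.2 hne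
  have habre : (a - b).re = di.1 - dj.1 := by rw [Complex.sub_re, hare, hbre]
  have habim : (a - b).im = di.2 - dj.2 := by rw [Complex.sub_im, haim, hbim]
  have hdist_eq : dist di dj = max |di.1 - dj.1| |di.2 - dj.2| := by
    rw [Prod.dist_eq]; simp [Real.dist_eq]
  have hdler : dist di dj ≤ ‖a - b‖ := by
    rw [hdist_eq]
    apply max_le
    · have := Complex.abs_re_le_norm (a - b); rw [habre] at this
      exact this
    · have := Complex.abs_im_le_norm (a - b); rw [habim] at this
      exact this
  have hrle : ‖a - b‖ ≤ 2 * dist di dj := by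
    calc ‖a - b‖ ≤ |(a - b).re| + |(a - b).im| :=
        Complex.norm_le_abs_re_add_abs_im _
      _ ≤ dist di dj + dist di dj := by
          rw [hdist_eq, habre, habim]
          exact add_le_add (le_max_left _ _) (le_max_right _ _)
      _ = 2 * dist di dj := by ring
  have hr0 : 0 < ‖a - b‖ := lt_of_lt_of_le hd0 hdler
  have hlogdiff : |Real.log (1 / ‖a - b‖) - Real.log (1 / dist di dj)| ≤ Real.log 2 := by
    rw [one_div, one_div, Real.log_inv, Real.log_inv]
    rw [show -Real.log ‖a - b‖ - -Real.log (dist di dj)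
      = -(Real.log ‖a - b‖ - Real.log (dist di dj)) by ring, abs_neg]
    have h1 : Real.log (dist di dj) ≤ Real.log ‖a - b‖ := Real.log_le_log hd0 hdler
    rw [abs_of_nonneg (by linarith)]
    have h2 : Real.log ‖a - b‖ - Real.log (dist di dj) = Real.log (‖a - b‖ / dist di dj) :=
      (Real.log_div hr0.ne' hd0.ne').symm
    rw [h2]
    apply Real.log_le_log (by positivity)
    rw [div_le_iff₀ hd0]; linarith
  have hcoeff : (C * bui * buj + K * bwi * bwj + R * bui * bwj + R * bwi * buj) / (2 * π)
      = S * (2 * π) := by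
    rw [hS]
    field_simp
    ring
  rw [hcoeff]
  have hmain := main_complex hmeasc hRΩ hsubc hδ hamem hbmem habne hballs
  rw [← hMc] at hmain
  set I : ℝ := ∫ w in Ωc, Ff a b w with hI
  set Lr : ℝ := Real.log (1 / ‖a - b‖) with hLr
  set Ld : ℝ := Real.log (1 / dist di dj) with hLd
  calc |S * I - S * (2 * π) * Ld|
      = |S| * |I - 2 * π * Lr + 2 * π * (Lr - Ld)| := by
        rw [← abs_mul]; congr 1; ring
    _ ≤ |S| * (|I - 2 * π * Lr| + |2 * π * (Lr - Ld)|) :=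
        mul_le_mul_of_nonneg_left (abs_add_le _ _) (abs_nonneg _)
    _ ≤ |S| * (Mc + 2 * π * Real.log 2) := by
        apply mul_le_mul_of_nonneg_left _ (abs_nonneg _)
        have h3 : |2 * π * (Lr - Ld)| = 2 * π * |Lr - Ld| := by
          rw [abs_mul, abs_of_pos (by positivity : (0:ℝ) < 2 * π)]
        rw [h3]
        have h4 : 2 * π * |Lr - Ld| ≤ 2 * π * Real.log 2 :=
          mul_le_mul_of_nonneg_left hlogdiff (by positivity)
        linarith [hmain]
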